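/- Let m ≥ 1 and n ≥ 0 be integers, and let A be an n × n matrix over a commutative ring. Then ∑_{f : {1,…,n} → {1,…,m}} ∏_{c=1}^{m} det(A[f⁻¹(c)]) = ∑_{σ ∈ S_n} (−1)^{n − m(σ)} m^{m(σ)} ∏_{i=1}^n A_{σ(i), i}, where A[S] denotes the principal submatrix of A with rows and columns indexed by S (with det of the empty matrix equal to 1), and m(σ) is the number of cycles of σ. Over ℝ the right-hand side equals m^n · det_{−1/m} A; this identity expresses that the α-determinantal process with α = −1/m and kernel K is the superposition of m i.i.d. determinantal processes with kernel K/m. -/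

import Mathlib

/-- The setoid on `Fin n` whose classes are the cycles (orbits) of a permutation `σ`,
counting fixed points as singleton orbits. -/
def sameCycleSetoid {n : ℕ} (σ : Equiv.Perm (Fin n)) : Setoid (Fin n) :=
  ⟨σ.SameCycle, ⟨fun x => Equiv.Perm.SameCycle.refl σ x,
    fun h => h.symm, fun h h' => h.trans h'⟩⟩

/-- `cycleCount σ` is the number of cycles `m(σ)` of the permutation `σ`. -/
noncomputable def cycleCount {n : ℕ} (σ : Equiv.Perm (Fin n)) : ℕ :=
  Nat.card (Quotient (sameCycleSetoid σ))

/-- The `α`-determinant of an `n × n` real matrix: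
`det_α A = ∑_{σ ∈ S_n} α^(n - m(σ)) ∏_i A_{σ(i), i}`. -/
noncomputable def adet {n : ℕ} (α : ℝ) (A : Matrix (Fin n) (Fin n) ℝ) : ℝ :=
  ∑ σ : Equiv.Perm (Fin n), α ^ (n - cycleCount σ) * ∏ i, A (σ i) i

section aux

lemma permMatrix_apply' {n : Type*} [DecidableEq n] (σ : Equiv.Perm n) (i j : n) :
    Equiv.Perm.permMatrix ℤ σ i j = if σ i = j then 1 else 0 := by
  simp [Equiv.Perm.permMatrix, PEquiv.toMatrix_apply, Equiv.toPEquiv_apply]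

lemma my_sign_sigmaCongrRight {ι : Type*} [Fintype ι] [LinearOrder ι] {β : ι → Type*}
    [∀ i, Fintype (β i)] [∀ i, DecidableEq (β i)] (τ : ∀ i, Equiv.Perm (β i)) :
    Equiv.Perm.sign (Equiv.Perm.sigmaCongrRight τ) = ∏ i, Equiv.Perm.sign (τ i) := by
  set σ := Equiv.Perm.sigmaCongrRight τ with hσ
  have hfst : ∀ x : Σ i, β i, (σ x).1 = x.1 := fun x => rfl
  have hbt : (σ.permMatrix ℤ).BlockTriangular Sigma.fst := by
    intro x y h
    rw [permMatrix_apply', if_neg]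
    intro hxy
    rw [← hxy] at h
    exact absurd (hfst x) (ne_of_gt h)
  have h1 : ((Equiv.Perm.sign σ : ℤ)) = ∏ a ∈ Finset.image (Sigma.fst : (Σ i, β i) → ι) Finset.univ,
      ((σ.permMatrix ℤ).toSquareBlock Sigma.fst a).det := by
    have := hbt.det
    rw [Matrix.det_permutation] at this
    simpa using this
  have h2 : ∀ a : ι, ((σ.permMatrix ℤ).toSquareBlock Sigma.fst a).det
      = (Equiv.Perm.sign (τ a) : ℤ) := by
    intro a
    let e : β a ≃ {x : Σ i, β i // x.1 = a} :=
      { toFun := fun b => ⟨⟨a, b⟩, rfl⟩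
        invFun := fun x => x.2 ▸ x.1.2
        left_inv := fun b => rfl
        right_inv := by rintro ⟨⟨c, b⟩, rfl⟩; rfl }
    have hρ : (σ.permMatrix ℤ).toSquareBlock Sigma.fst a
        = Equiv.Perm.permMatrix ℤ (e.permCongr (τ a)) := by
      ext x y
      rcases x with ⟨⟨c, b⟩, hc⟩
      rcases y with ⟨⟨d, b'⟩, hd⟩
      obtain rfl : c = a := hc
      simp only [Matrix.toSquareBlock_def, Matrix.of_apply]
      rw [permMatrix_apply', permMatrix_apply']
      congr 1
      obtain rfl : d = c := hd
      rw [eq_iff_iff]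
      exact ⟨fun h => Subtype.ext h, fun h => congrArg Subtype.val h⟩
    rw [hρ, Matrix.det_permutation]
    simp [Equiv.Perm.sign_permCongr]
  rw [Finset.prod_congr rfl (fun a _ => h2 a)] at h1
  have h3 : ∀ a : ι, a ∉ Finset.image (Sigma.fst : (Σ i, β i) → ι) Finset.univ →
      (Equiv.Perm.sign (τ a) : ℤ) = 1 := by
    intro a ha
    rw [Finset.mem_image] at ha
    push_neg at ha
    have : IsEmpty (β a) := ⟨fun b => ha ⟨a, b⟩ (Finset.mem_univ _) rfl⟩
    have h1 : τ a = 1 := Subsingleton.elim _ _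
    rw [h1]; simp
  have h4 : (Equiv.Perm.sign σ : ℤ) = ∏ a : ι, (Equiv.Perm.sign (τ a) : ℤ) := by
    rw [h1]
    exact Finset.prod_subset (Finset.subset_univ _) (fun a _ ha => h3 a ha)
  apply Units.ext
  exact_mod_cast h4

lemma cycleCount_le {n : ℕ} (σ : Equiv.Perm (Fin n)) : cycleCount σ ≤ n := by
  have : Nat.card (Quotient (sameCycleSetoid σ)) ≤ Nat.card (Fin n) :=
    Nat.card_le_card_of_surjective (Quotient.mk _) Quotient.mk_surjective
  simpa [cycleCount, Nat.card_eq_fintype_card] using this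

lemma cycleCount_eq {n : ℕ} (σ : Equiv.Perm (Fin n)) :
    cycleCount σ = (n - σ.support.card) + σ.cycleFactorsFinset.card := by
  classical
  let F : Fin n → ({x : Fin n // σ x = x} ⊕ {c : Equiv.Perm (Fin n) // c ∈ σ.cycleFactorsFinset}) :=
    fun x => if h : σ x = x then Sum.inl ⟨x, h⟩ else
      Sum.inr ⟨σ.cycleOf x,
        Equiv.Perm.cycleOf_mem_cycleFactorsFinset_iff.mpr (Equiv.Perm.mem_support.mpr h)⟩
  have hresp : ∀ x y, σ.SameCycle x y → F x = F y := by
    intro x y hxy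
    by_cases hx : σ x = x
    · have hyx : y = x := by
        obtain ⟨k, hk⟩ := hxy
        rw [← hk, Equiv.Perm.zpow_apply_eq_self_of_apply_eq_self hx]
      subst hyx; rfl
    · have hy : ¬ σ y = y := by
        intro hy
        obtain ⟨k, hk⟩ := hxy.symm
        rw [Equiv.Perm.zpow_apply_eq_self_of_apply_eq_self hy] at hk
        exact hx (hk ▸ hy)
      show dite _ _ _ = dite _ _ _
      rw [dif_neg hx, dif_neg hy]
      exact congrArg Sum.inr (Subtype.ext hxy.cycleOf_eq)
  let Fq : Quotient (sameCycleSetoid σ) → _ := Quotient.lift F hresp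
  have hbij : Function.Bijective Fq := by
    constructor
    · intro q1 q2
      induction q1 using Quotient.ind
      induction q2 using Quotient.ind
      rename_i x y
      intro h
      change F x = F y at h
      apply Quotient.sound
      show σ.SameCycle x y
      by_cases hx : σ x = x <;> by_cases hy : σ y = y
      · simp only [F, dif_pos hx, dif_pos hy, Sum.inl.injEq, Subtype.mk.injEq] at h
        exact h ▸ Equiv.Perm.SameCycle.refl σ x
      · simp only [F, dif_pos hx, dif_neg hy] at h
        exact (Sum.inl_ne_inr h).elim
      · simp only [F, dif_neg hx, dif_pos hy] at h
        exact (Sum.inr_ne_inl h).elim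
      · simp only [F, dif_neg hx, dif_neg hy, Sum.inr.injEq, Subtype.mk.injEq] at h
        by_contra hsc
        have h1 : σ.cycleOf y x = σ x := by rw [← h]; exact σ.cycleOf_apply_self x
        have h2 : σ.cycleOf y x = x :=
          Equiv.Perm.cycleOf_apply_of_not_sameCycle (fun hc => hsc hc.symm)
        exact hx (h1 ▸ h2)
    · rintro (⟨x, hx⟩ | ⟨c, hc⟩)
      · exact ⟨Quotient.mk _ x, by show F x = _; simp only [F, dif_pos hx]⟩
      · obtain ⟨hc1, hc2⟩ := Equiv.Perm.mem_cycleFactorsFinset_iff.mp hc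
        obtain ⟨x, hxs⟩ := hc1.nonempty_support
        have hx : ¬ σ x = x := by rw [← hc2 x hxs]; exact Equiv.Perm.mem_support.mp hxs
        refine ⟨Quotient.mk _ x, ?_⟩
        show F x = _
        simp only [F, dif_neg hx]
        exact congrArg Sum.inr (Subtype.ext (Equiv.Perm.cycle_is_cycleOf hxs hc).symm)
  have hcard := Nat.card_eq_of_bijective Fq hbij
  rw [cycleCount, hcard, Nat.card_sum]
  congr 1
  · rw [Nat.card_eq_fintype_card, Fintype.card_subtype]
    have h5 := Finset.card_filter_add_card_filter_not (s := (Finset.univ : Finset (Fin n)))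
      (fun x => σ x = x)
    have hsupp : σ.support.card = (Finset.univ.filter (fun x => ¬ σ x = x)).card := rfl
    rw [Finset.card_univ, Fintype.card_fin] at h5
    omega
  · rw [Nat.card_eq_fintype_card, Fintype.card_coe]

lemma sign_eq_cycleCount {n : ℕ} (σ : Equiv.Perm (Fin n)) :
    Equiv.Perm.sign σ = (-1 : ℤˣ) ^ (n - cycleCount σ) := by
  classical
  have hsum := Equiv.Perm.sum_cycleType σ
  have hcardct : Multiset.card σ.cycleType = σ.cycleFactorsFinset.card := by
    rw [Equiv.Perm.cycleType_def, Multiset.card_map]; rfl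
  have hks : σ.cycleFactorsFinset.card ≤ σ.support.card := by
    rw [← hsum, ← hcardct]
    calc Multiset.card σ.cycleType = Multiset.card σ.cycleType • 1 := by simp
    _ ≤ σ.cycleType.sum := Multiset.card_nsmul_le_sum
        (fun x hx => le_trans (by norm_num) (Equiv.Perm.two_le_of_mem_cycleType hx))
  have hsn : σ.support.card ≤ n := by
    simpa using Finset.card_le_univ σ.support
  have hexp : σ.cycleType.sum + Multiset.card σ.cycleType
      = (n - cycleCount σ) + 2 * σ.cycleFactorsFinset.card := by
    rw [hsum, hcardct, cycleCount_eq]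
    omega
  rw [Equiv.Perm.sign_of_cycleType, hexp, pow_add, pow_mul]
  norm_num

lemma invariant_of_fix {m n : ℕ} {σ : Equiv.Perm (Fin n)} {f : Fin n → Fin m}
    (h : ∀ i, f (σ i) = f i) {x y : Fin n} (hxy : σ.SameCycle x y) : f x = f y := by
  have hz : ∀ (k : ℤ) (x : Fin n), f ((σ ^ k) x) = f x := by
    intro k
    induction k using Int.induction_on with
    | zero => intro x; simp
    | succ k ih =>
        intro x
        have : (σ ^ ((k : ℤ) + 1)) x = (σ ^ (k : ℤ)) (σ x) := by
          rw [_root_.zpow_add_one, Equiv.Perm.mul_apply]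
        rw [this, ih, h]
    | pred k ih =>
        intro x
        have : (σ ^ (-(k : ℤ) - 1)) x = (σ ^ (-(k : ℤ))) (σ⁻¹ x) := by
          rw [_root_.zpow_sub_one, Equiv.Perm.mul_apply]
        rw [this, ih]
        have := h (σ⁻¹ x)
        rw [show σ (σ⁻¹ x) = x from σ.apply_symm_apply x] at this; exact this.symm
  obtain ⟨k, hk⟩ := hxy
  rw [← hk, hz]

noncomputable instance {n : ℕ} (σ : Equiv.Perm (Fin n)) :
    Fintype (Quotient (sameCycleSetoid σ)) := Fintype.ofFinite _

lemma card_fix {m n : ℕ} (σ : Equiv.Perm (Fin n)) :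
    (Finset.univ.filter (fun f : Fin n → Fin m => ∀ i, f (σ i) = f i)).card
      = m ^ cycleCount σ := by
  classical
  let E : (Quotient (sameCycleSetoid σ) → Fin m) ≃ {f : Fin n → Fin m // ∀ i, f (σ i) = f i} :=
    { toFun := fun g => ⟨fun i => g (Quotient.mk _ i), fun i =>
        congrArg g (Quotient.sound (show σ.SameCycle (σ i) i from ⟨-1, by simp⟩))⟩
      invFun := fun fp => Quotient.lift fp.1 (fun a b hab => invariant_of_fix fp.2 hab)
      left_inv := fun g => by
        funext q
        induction q using Quotient.ind
        rfl
      right_inv := fun fp => Subtype.ext (funext fun i => rfl) }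
  have h1 : (Finset.univ.filter (fun f : Fin n → Fin m => ∀ i, f (σ i) = f i)).card
      = Fintype.card {f : Fin n → Fin m // ∀ i, f (σ i) = f i} :=
    (Fintype.card_subtype _).symm
  rw [h1, ← Fintype.card_congr E, Fintype.card_fun, Fintype.card_fin, cycleCount,
    Nat.card_eq_fintype_card]

def colourEquiv {m n : ℕ} (f : Fin n → Fin m) :
    (∀ c, Equiv.Perm {i : Fin n // f i = c}) ≃ {σ : Equiv.Perm (Fin n) // ∀ i, f (σ i) = f i} :=
  { toFun := fun τ => ⟨(Equiv.sigmaFiberEquiv f).permCongr (Equiv.Perm.sigmaCongrRight τ),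
      fun i => ((τ (f i)) ⟨i, rfl⟩).2⟩
    invFun := fun σ c => Equiv.Perm.subtypePerm σ.1 (fun x => by rw [σ.2 x])
    left_inv := fun τ => by
      funext c
      ext x
      rcases x with ⟨i, rfl⟩
      rfl
    right_inv := fun σ => Subtype.ext (Equiv.ext fun i => rfl) }

lemma colourEquiv_apply {m n : ℕ} (f : Fin n → Fin m) (τ : ∀ c, Equiv.Perm {i : Fin n // f i = c})
    {c : Fin m} (x : {i : Fin n // f i = c}) :
    ((colourEquiv f τ : Equiv.Perm (Fin n))) x.1 = (τ c x).1 := by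
  rcases x with ⟨i, rfl⟩
  rfl

lemma fiber_det_prod {R : Type*} [CommRing R] {m n : ℕ} (A : Matrix (Fin n) (Fin n) R)
    (f : Fin n → Fin m) :
    (∏ c : Fin m, (A.submatrix (fun x : {i : Fin n // f i = c} => (x : Fin n))
        (fun x : {i : Fin n // f i = c} => (x : Fin n))).det)
    = ∑ σ : Equiv.Perm (Fin n),
        (if ∀ i, f (σ i) = f i then ((Equiv.Perm.sign σ : ℤ) : R) * ∏ i, A (σ i) i else 0) := by
  classical
  have hR : (∑ σ : Equiv.Perm (Fin n),
      (if ∀ i, f (σ i) = f i then ((Equiv.Perm.sign σ : ℤ) : R) * ∏ i, A (σ i) i else 0))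
      = ∑ σ : {σ : Equiv.Perm (Fin n) // ∀ i, f (σ i) = f i},
          ((Equiv.Perm.sign (σ : Equiv.Perm (Fin n)) : ℤ) : R) * ∏ i, A ((σ : Equiv.Perm (Fin n)) i) i := by
    rw [← Finset.sum_filter]
    exact Finset.sum_subtype _ (by simp) _
  rw [hR]
  simp_rw [Matrix.det_apply', Matrix.submatrix_apply]
  rw [Finset.prod_univ_sum]
  rw [Fintype.piFinset_univ]
  apply Fintype.sum_equiv (colourEquiv f)
  intro τ
  set E := ((colourEquiv f τ : Equiv.Perm (Fin n))) with hE
  rw [Finset.prod_mul_distrib]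
  congr 1
  · have hsg : Equiv.Perm.sign E = ∏ c, Equiv.Perm.sign (τ c) := by
      rw [hE, show ((colourEquiv f τ : Equiv.Perm (Fin n)))
          = (Equiv.sigmaFiberEquiv f).permCongr (Equiv.Perm.sigmaCongrRight τ) from rfl,
        Equiv.Perm.sign_permCongr]
      convert my_sign_sigmaCongrRight τ using 3
    rw [hsg]
    push_cast
    rfl
  · rw [← Equiv.prod_comp (Equiv.sigmaFiberEquiv f) (fun i => A (E i) i), Finset.prod_sigma']
    apply Finset.prod_congr Finset.univ_sigma_univ
    rintro ⟨c, x⟩ _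
    show A ((τ c x) : Fin n) (x : Fin n) = A (E x.1) x.1
    rw [colourEquiv_apply f τ x]

end aux

/-- Superposition identity: the sum over all colourings `f : {1,…,n} → {1,…,m}` of the products of
principal minors `det (A[f⁻¹(c)])` equals `∑_σ (-1)^(n-m(σ)) m^(m(σ)) ∏_i A_{σ(i),i}`; over `ℝ`
the latter equals `m^n · det_{-1/m} A`. -/
theorem sum_colourings_principal_minors {R : Type*} [CommRing R] (m n : ℕ) (hm : 1 ≤ m)
    (A : Matrix (Fin n) (Fin n) R) :
    (∑ f : Fin n → Fin m, ∏ c : Fin m,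
        (A.submatrix (fun x : {i : Fin n // f i = c} => (x : Fin n))
          (fun x : {i : Fin n // f i = c} => (x : Fin n))).det)
      = ∑ σ : Equiv.Perm (Fin n),
          (-1 : R) ^ (n - cycleCount σ) * (m : R) ^ (cycleCount σ) * ∏ i, A (σ i) i ∧
    ∀ B : Matrix (Fin n) (Fin n) ℝ,
      (∑ σ : Equiv.Perm (Fin n),
          (-1 : ℝ) ^ (n - cycleCount σ) * (m : ℝ) ^ (cycleCount σ) * ∏ i, B (σ i) i)
        = (m : ℝ) ^ n * adet (-(1 / (m : ℝ))) B := by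
  classical
  constructor
  · rw [Finset.sum_congr rfl (fun f _ => fiber_det_prod A f), Finset.sum_comm]
    apply Finset.sum_congr rfl
    intro σ _
    rw [← Finset.sum_filter, Finset.sum_const, card_fix σ]
    have hsign : ((Equiv.Perm.sign σ : ℤ) : R) = (-1 : R) ^ (n - cycleCount σ) := by
      rw [sign_eq_cycleCount σ]
      push_cast
      rfl
    rw [hsign, nsmul_eq_mul]
    push_cast
    ring
  · intro B
    rw [adet, Finset.mul_sum]
    apply Finset.sum_congr rfl
    intro σ _
    have hc := cycleCount_le σ
    have hm' : (m : ℝ) ≠ 0 := by positivity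
    set c := cycleCount σ
    set P := ∏ i, B (σ i) i
    have h1 : (-(1/(m:ℝ)))^(n - c) = (-1 : ℝ)^(n-c) * (1/(m:ℝ))^(n-c) := by
      rw [← neg_one_mul, mul_pow]
    have h2 : (m:ℝ)^n = (m:ℝ)^c * (m:ℝ)^(n - c) := by
      rw [← pow_add]
      congr 1
      omega
    have h3 : (m:ℝ)^(n-c) * (1/(m:ℝ))^(n - c) = 1 := by
      rw [one_div, ← mul_pow, mul_inv_cancel₀ hm', one_pow]
    rw [h1, h2]
    calc (-1 : ℝ)^(n-c) * (m:ℝ)^c * P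
        = ((-1 : ℝ)^(n-c) * (m:ℝ)^c * P) * ((m:ℝ)^(n-c) * (1/(m:ℝ))^(n - c)) := by
          rw [h3, mul_one]
      _ = (m:ℝ)^c * (m:ℝ)^(n-c) * ((-1:ℝ)^(n-c) * (1/(m:ℝ))^(n-c) * P) := by ring
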